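/- Let F be a finite field of characteristic p and order q, and let d be an invertible exponent over F. Then {W_{F,d}(a) : a ∈ F, a ≠ 0} ⊆ ℤ if and only if d ≡ 1 (mod p−1). -/

import Mathlib

open scoped BigOperators

/-- The canonical additive character of a finite field `F` of characteristic `p`:
`ψ(x) = exp(2πi·Tr(x)/p)`, where `Tr` is the absolute trace from `F` to `𝔽_p = ZMod p`. -/
noncomputable def canonicalPsi (F : Type*) [Field F] [Fintype F] (p : ℕ) [CharP F p]
    (x : F) : ℂ :=
  letI : Algebra (ZMod p) F := ZMod.algebra F p
  Complex.exp (2 * Real.pi * Complex.I * ((Algebra.trace (ZMod p) F x).val : ℂ) / (p : ℂ))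

/-- The Weil sum `W_{F,d}(a) = ∑_{x ∈ F} ψ(x^d − a·x)`. -/
noncomputable def weilSum (F : Type*) [Field F] [Fintype F] (p : ℕ) [CharP F p]
    (d : ℕ) (a : F) : ℂ :=
  ∑ x : F, canonicalPsi F p (x ^ d - a * x)

noncomputable def auxZeta (p : ℕ) : ℂ := Complex.exp (2 * Real.pi * Complex.I / p)

noncomputable def trF (F : Type*) [Field F] [Fintype F] (p : ℕ) [CharP F p] (x : F) :
    ZMod p :=
  letI : Algebra (ZMod p) F := ZMod.algebra F p
  Algebra.trace (ZMod p) F x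

noncomputable def embF (F : Type*) [Field F] [Fintype F] (p : ℕ) [CharP F p] (t : ZMod p) :
    F :=
  letI : Algebra (ZMod p) F := ZMod.algebra F p
  algebraMap (ZMod p) F t

set_option linter.unusedSectionVars false

section Aux
open scoped Classical

variable {F : Type*} [Field F] [Fintype F] {p : ℕ} [Fact p.Prime] [CharP F p]

lemma auxZeta_prim : IsPrimitiveRoot (auxZeta p) p :=
  Complex.isPrimitiveRoot_exp p (Fact.out (p := p.Prime)).ne_zero

lemma auxZeta_pow_p : (auxZeta p) ^ p = 1 := auxZeta_prim.pow_eq_one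

lemma sum_zmod_eq (f : ZMod p → ℂ) :
    ∑ j : ZMod p, f j = ∑ i ∈ Finset.range p, f (i : ZMod p) := by
  haveI : NeZero p := ⟨(Fact.out (p := p.Prime)).ne_zero⟩
  rw [← Fin.sum_univ_eq_sum_range]
  refine (Fintype.sum_bijective (fun i : Fin p => ((i : ℕ) : ZMod p)) ⟨?_, ?_⟩ _ _
    fun x => rfl).symm
  · intro i j h
    have := congrArg ZMod.val h
    rwa [ZMod.val_cast_of_lt i.isLt, ZMod.val_cast_of_lt j.isLt, ← Fin.ext_iff] at this
  · intro j
    exact ⟨⟨j.val, ZMod.val_lt j⟩, ZMod.natCast_rightInverse j⟩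

lemma sum_auxZeta : ∑ j : ZMod p, (auxZeta p) ^ j.val = 0 := by
  haveI : NeZero p := ⟨(Fact.out (p := p.Prime)).ne_zero⟩
  rw [sum_zmod_eq]
  have h1 : ∀ i ∈ Finset.range p, auxZeta p ^ (ZMod.val ((i : ZMod p))) = auxZeta p ^ i := by
    intro i hi
    rw [ZMod.val_cast_of_lt (Finset.mem_range.mp hi)]
  rw [Finset.sum_congr rfl h1]
  exact auxZeta_prim.geom_sum_eq_zero (Fact.out (p := p.Prime)).one_lt

lemma psi_eq (x : F) : canonicalPsi F p x = auxZeta p ^ (trF F p x).val := by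
  rw [canonicalPsi, auxZeta, trF, ← Complex.exp_nat_mul]
  ring_nf

lemma trF_add (x y : F) : trF F p (x + y) = trF F p x + trF F p y := by
  simp [trF, map_add]

lemma trF_smul (t : ZMod p) (x : F) : trF F p (embF F p t * x) = t * trF F p x := by
  letI : Algebra (ZMod p) F := ZMod.algebra F p
  simp only [trF, embF]
  rw [← Algebra.smul_def, map_smul, smul_eq_mul]

lemma psi_add (x y : F) :
    canonicalPsi F p (x + y) = canonicalPsi F p x * canonicalPsi F p y := by
  haveI : NeZero p := ⟨(Fact.out (p := p.Prime)).ne_zero⟩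
  rw [psi_eq, psi_eq, psi_eq, trF_add, ZMod.val_add, ← pow_eq_pow_mod _ auxZeta_pow_p, pow_add]

lemma psi_zero : canonicalPsi F p (0 : F) = 1 := by
  rw [psi_eq]
  simp [trF]

lemma psi_ne_zero (x : F) : canonicalPsi F p x ≠ 0 := by
  rw [psi_eq]
  exact pow_ne_zero _ (auxZeta_prim.ne_zero (Fact.out (p := p.Prime)).ne_zero)

lemma psi_ne_one {x : F} (hx : trF F p x ≠ 0) : canonicalPsi F p x ≠ 1 := by
  haveI : NeZero p := ⟨(Fact.out (p := p.Prime)).ne_zero⟩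
  rw [psi_eq]
  refine auxZeta_prim.pow_ne_one_of_pos_of_lt ?_ (ZMod.val_lt _)
  exact fun h => hx ((ZMod.val_eq_zero _).mp h)

lemma trF_nondeg {v : F} (hv : v ≠ 0) : ∃ u : F, trF F p (v * u) ≠ 0 := by
  have hp : ringChar F = p := ringChar.eq F p
  subst hp
  letI : Algebra (ZMod (ringChar F)) F := ZMod.algebra F (ringChar F)
  obtain ⟨b, hb⟩ := FiniteField.trace_to_zmod_nondegenerate F hv
  exact ⟨b, hb⟩

lemma sum_psi : ∑ a : F, canonicalPsi F p a = 0 := by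
  obtain ⟨u, hu⟩ := trF_nondeg (F := F) (p := p) one_ne_zero
  rw [one_mul] at hu
  have key : canonicalPsi F p u * ∑ a : F, canonicalPsi F p a = ∑ a : F, canonicalPsi F p a := by
    rw [Finset.mul_sum]
    simp_rw [← psi_add]
    exact Fintype.sum_bijective (fun a : F => u + a) ((Equiv.addLeft u).bijective) _ _ fun a => rfl
  have h2 : (canonicalPsi F p u - 1) * ∑ a : F, canonicalPsi F p a = 0 := by
    rw [sub_mul, one_mul, key, sub_self]
  rcases mul_eq_zero.mp h2 with h | h
  · exact (psi_ne_one hu (sub_eq_zero.mp h)).elim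
  · exact h

lemma sum_psi_mul (b : F) :
    ∑ a : F, canonicalPsi F p (b * a) = if b = 0 then (Fintype.card F : ℂ) else 0 := by
  split_ifs with hb
  · subst hb; simp [psi_zero]
  · rw [← sum_psi (F := F) (p := p)]
    exact Fintype.sum_bijective (fun a : F => b * a) ((Equiv.mulLeft₀ b hb).bijective) _ _ fun a => rfl

lemma sum_psi_weil (d : ℕ) (c : F) :
    ∑ a : F, canonicalPsi F p (c * a) * weilSum F p d a
      = (Fintype.card F : ℂ) * canonicalPsi F p (c ^ d) := by
  simp_rw [weilSum, Finset.mul_sum]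
  rw [Finset.sum_comm]
  have key : ∀ x a : F, canonicalPsi F p (c * a) * canonicalPsi F p (x ^ d - a * x)
      = canonicalPsi F p (x ^ d) * canonicalPsi F p ((c - x) * a) := by
    intro x a
    rw [← psi_add, ← psi_add]
    congr 1
    ring
  simp_rw [key, ← Finset.mul_sum, sum_psi_mul]
  rw [Finset.sum_eq_single c]
  · simp [mul_comm]
  · intro x _ hx
    rw [if_neg (by simpa [sub_eq_zero] using (Ne.symm hx)), mul_zero]
  · intro h
    exact absurd (Finset.mem_univ c) h

lemma powd_bijective (d : ℕ) (hd : 0 < d) (hgcd : Nat.gcd d (Fintype.card F - 1) = 1) :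
    Function.Bijective (fun x : F => x ^ d) := by
  have hco : (Nat.card Fˣ).Coprime d := by
    rw [Nat.card_units, Nat.card_eq_fintype_card]
    exact Nat.coprime_comm.mp hgcd
  have hinj : Function.Injective (fun x : F => x ^ d) := by
    intro x y h
    simp only at h
    rcases eq_or_ne x 0 with hx | hx
    · subst hx
      rw [zero_pow hd.ne'] at h
      exact (pow_eq_zero_iff hd.ne').mp h.symm |>.symm
    rcases eq_or_ne y 0 with hy | hy
    · subst hy
      rw [zero_pow hd.ne'] at h
      exact (hx ((pow_eq_zero_iff hd.ne').mp h)).elim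
    have hu : (Units.mk0 x hx) ^ d = (Units.mk0 y hy) ^ d := by
      ext
      simpa using h
    have := (powCoprime hco).injective hu
    simpa [Units.ext_iff] using this
  exact ⟨hinj, Finite.surjective_of_injective hinj⟩

lemma weilSum_zero (d : ℕ) (hd : 0 < d) (hgcd : Nat.gcd d (Fintype.card F - 1) = 1) :
    weilSum F p d 0 = 0 := by
  rw [weilSum]
  simp only [zero_mul, sub_zero]
  rw [← sum_psi (F := F) (p := p)]
  exact Fintype.sum_bijective _ (powd_bijective d hd hgcd) _ _ fun x => rfl

lemma constancy (A : ZMod p → ℤ)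
    (h : ∑ j : ZMod p, (A j : ℂ) * auxZeta p ^ j.val = 0) (j k : ZMod p) : A j = A k := by
  haveI : NeZero p := ⟨(Fact.out (p := p.Prime)).ne_zero⟩
  set ζ := auxZeta p with hζ
  set P : Polynomial ℚ := ∑ i ∈ Finset.range p, Polynomial.C ((A i : ℚ)) * Polynomial.X ^ i
    with hP
  have hcoeff : ∀ i, i < p → P.coeff i = ((A i : ℚ)) := by
    intro i hi
    rw [hP, Polynomial.finset_sum_coeff]
    simp_rw [Polynomial.coeff_C_mul, Polynomial.coeff_X_pow]
    rw [Finset.sum_eq_single i]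
    · simp
    · intro b _ hb
      rw [if_neg (fun hh => hb hh.symm), mul_zero]
    · intro hh
      exact absurd (Finset.mem_range.mpr hi) hh
  have haev : Polynomial.aeval ζ P = 0 := by
    rw [hP, map_sum]
    simp_rw [map_mul, Polynomial.aeval_C, map_pow, Polynomial.aeval_X]
    rw [← h, sum_zmod_eq (p := p) (fun j => (A j : ℂ) * ζ ^ j.val)]
    refine Finset.sum_congr rfl fun i hi => ?_
    rw [ZMod.val_cast_of_lt (Finset.mem_range.mp hi)]
    norm_num
  have hdvd : Polynomial.cyclotomic p ℚ ∣ P := by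
    rw [Polynomial.cyclotomic_eq_minpoly_rat auxZeta_prim (Fact.out (p := p.Prime)).pos]
    exact minpoly.dvd ℚ ζ haev
  obtain ⟨Q, hQ⟩ := hdvd
  have key : ∀ i, i < p → ∀ i', i' < p → P.coeff i = P.coeff i' := by
    by_cases hP0 : P = 0
    · intro i _ i' _
      rw [hP0]
      simp
    · have hQ0 : Q ≠ 0 := fun hh => hP0 (by rw [hQ, hh, mul_zero])
      have hdegP : P.natDegree ≤ p - 1 := by
        refine Polynomial.natDegree_sum_le_of_forall_le _ _ fun i hi => ?_
        refine (Polynomial.natDegree_C_mul_le _ _).trans ?_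
        rw [Polynomial.natDegree_X_pow]
        have := Finset.mem_range.mp hi
        omega
      have hdegc : (Polynomial.cyclotomic p ℚ).natDegree = p - 1 := by
        rw [Polynomial.natDegree_cyclotomic, Nat.totient_prime (Fact.out (p := p.Prime))]
      have hmul : P.natDegree = (p - 1) + Q.natDegree := by
        rw [hQ, Polynomial.natDegree_mul (Polynomial.cyclotomic_ne_zero p ℚ) hQ0, hdegc]
      have hQdeg : Q.natDegree = 0 := by omega
      have hQC : Q = Polynomial.C (Q.coeff 0) := Polynomial.eq_C_of_natDegree_eq_zero hQdeg
      have hcoeffP : ∀ i, i < p → P.coeff i = Q.coeff 0 := by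
        intro i hi
        rw [hQ, hQC, Polynomial.coeff_mul_C, Polynomial.cyclotomic_prime,
          Polynomial.finset_sum_coeff]
        simp_rw [Polynomial.coeff_X_pow]
        rw [Finset.sum_eq_single i]
        · simp
        · intro b _ hb
          rw [if_neg fun hh => hb hh.symm]
        · intro hh
          exact absurd (Finset.mem_range.mpr hi) hh
      intro i hi i' hi'
      rw [hcoeffP i hi, hcoeffP i' hi']
  have hjk : P.coeff j.val = P.coeff k.val := key _ (ZMod.val_lt j) _ (ZMod.val_lt k)
  rw [hcoeff _ (ZMod.val_lt j), hcoeff _ (ZMod.val_lt k)] at hjk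
  rw [ZMod.natCast_rightInverse j, ZMod.natCast_rightInverse k] at hjk
  exact_mod_cast hjk

lemma embF_injective : Function.Injective (embF F p) := by
  letI : Algebra (ZMod p) F := ZMod.algebra F p
  exact (algebraMap (ZMod p) F).injective

lemma embF_pow (t : ZMod p) (n : ℕ) : embF F p (t ^ n) = (embF F p t) ^ n := by
  letI : Algebra (ZMod p) F := ZMod.algebra F p
  exact map_pow (algebraMap (ZMod p) F) t n

lemma embF_ne_zero {t : ZMod p} (ht : t ≠ 0) : embF F p t ≠ 0 := by
  intro h
  apply ht
  apply embF_injective (F := F)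
  rw [h]
  letI : Algebra (ZMod p) F := ZMod.algebra F p
  exact (map_zero (algebraMap (ZMod p) F)).symm

lemma modeq_of_pow_eq (d : ℕ) (hd : 0 < d) (hall : ∀ t : ZMod p, t ^ d = t) :
    d ≡ 1 [MOD p - 1] := by
  obtain ⟨g, hg⟩ := IsCyclic.exists_generator (α := (ZMod p)ˣ)
  have hgd : g ^ d = g := by
    ext
    rw [Units.val_pow_eq_pow_val]
    exact hall _
  have hone : g ^ (d - 1) = 1 := by
    have h2 : g ^ (d - 1) * g = 1 * g := by
      rw [one_mul, ← pow_succ]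
      rw [show d - 1 + 1 = d by omega]
      exact hgd
    exact mul_right_cancel h2
  have hord : orderOf g = p - 1 := by
    rw [orderOf_eq_card_of_forall_mem_zpowers hg, Nat.card_eq_fintype_card, ZMod.card_units]
  have hdvd : (p - 1) ∣ (d - 1) := hord ▸ orderOf_dvd_of_pow_eq_one hone
  exact ((Nat.modEq_iff_dvd' (by omega)).mpr hdvd).symm

lemma pow_eq_of_modeq (d : ℕ) (hd : 0 < d) (hmod : d ≡ 1 [MOD p - 1]) (t : ZMod p) :
    t ^ d = t := by
  have hdvd : (p - 1) ∣ (d - 1) := (Nat.modEq_iff_dvd' (by omega : 1 ≤ d)).mp hmod.symm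
  obtain ⟨c, hc⟩ := hdvd
  rcases eq_or_ne t 0 with rfl | ht
  · rw [zero_pow hd.ne']
  · have h1 : t ^ (p - 1) = 1 := ZMod.pow_card_sub_one_eq_one ht
    calc t ^ d = t ^ (d - 1) * t := by rw [← pow_succ, show d - 1 + 1 = d by omega]
    _ = (t ^ (p - 1)) ^ c * t := by rw [← pow_mul, ← hc]
    _ = t := by rw [h1, one_pow, one_mul]

lemma weil_int (d : ℕ) (hd : 0 < d) (hmod : d ≡ 1 [MOD p - 1]) (a : F) :
    ∃ n : ℤ, weilSum F p d a = n := by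
  haveI : NeZero p := ⟨(Fact.out (p := p.Prime)).ne_zero⟩
  set f : F → F := fun x => x ^ d - a * x with hf
  set N : ZMod p → ℕ := fun j => (Finset.univ.filter fun x : F => trF F p (f x) = j).card
    with hN
  have hW : weilSum F p d a = ∑ j : ZMod p, (N j : ℂ) * auxZeta p ^ j.val := by
    rw [weilSum]
    simp_rw [psi_eq]
    rw [← Finset.sum_fiberwise' Finset.univ (fun x : F => trF F p (f x))
      (fun j : ZMod p => auxZeta p ^ j.val)]
    refine Finset.sum_congr rfl fun j _ => ?_
    rw [Finset.sum_const, hN, nsmul_eq_mul]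
  -- N is constant on nonzero values
  have hNt : ∀ t : ZMod p, t ≠ 0 → ∀ j : ZMod p, N (t * j) = N j := by
    intro t ht j
    have hu : embF F p t ≠ 0 := embF_ne_zero ht
    have hud : (embF F p t) ^ d = embF F p t := by
      rw [← embF_pow, pow_eq_of_modeq d hd hmod]
    have hmulf : ∀ x : F, f (embF F p t * x) = embF F p t * f x := by
      intro x
      simp only [hf]
      rw [mul_pow, hud]
      ring
    rw [hN]
    refine Finset.card_nbij'
      (s := Finset.univ.filter fun x : F => trF F p (f x) = t * j)
      (t := Finset.univ.filter fun x : F => trF F p (f x) = j)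
      (fun x => (embF F p t)⁻¹ * x) (fun x => embF F p t * x) ?_ ?_ ?_ ?_
    · intro x hx
      rw [Finset.mem_coe, Finset.mem_filter] at hx ⊢
      refine ⟨Finset.mem_univ _, ?_⟩
      have hx2 := hx.2
      have hxx : embF F p t * ((embF F p t)⁻¹ * x) = x := by field_simp
      rw [← hxx, hmulf, trF_smul] at hx2
      exact mul_left_cancel₀ ht hx2
    · intro x hx
      rw [Finset.mem_coe, Finset.mem_filter] at hx ⊢
      refine ⟨Finset.mem_univ _, ?_⟩
      beta_reduce
      rw [hmulf, trF_smul, hx.2]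
    · intro x _
      field_simp
    · intro x _
      field_simp
  have hNone : ∀ j : ZMod p, j ≠ 0 → N j = N 1 := by
    intro j hj
    have := hNt j hj 1
    rwa [mul_one] at this
  have hzero : ((0 : ZMod p)).val = 0 := ZMod.val_zero
  have hsum1 : ∑ j ∈ (Finset.univ : Finset (ZMod p)) \ {0}, auxZeta p ^ j.val = -1 := by
    have := Finset.sum_eq_sum_sdiff_singleton_add (Finset.mem_univ (0 : ZMod p))
      (fun j : ZMod p => auxZeta p ^ j.val)
    rw [sum_auxZeta (p := p), hzero, pow_zero] at this
    linear_combination -this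
  have hsplit : weilSum F p d a = (N 0 : ℂ) - (N 1 : ℂ) := by
    rw [hW, Finset.sum_eq_sum_sdiff_singleton_add (Finset.mem_univ (0 : ZMod p))]
    have : ∀ j ∈ (Finset.univ : Finset (ZMod p)) \ {0},
        (N j : ℂ) * auxZeta p ^ j.val = (N 1 : ℂ) * auxZeta p ^ j.val := by
      intro j hj
      rw [Finset.mem_sdiff, Finset.mem_singleton] at hj
      rw [hNone j hj.2]
    rw [Finset.sum_congr rfl this, ← Finset.mul_sum, hsum1, hzero, pow_zero]
    ring
  exact ⟨(N 0 : ℤ) - (N 1 : ℤ), by rw [hsplit]; push_cast; ring⟩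

lemma converse_pow_eq (d : ℕ) (hd : 0 < d) (hgcd : Nat.gcd d (Fintype.card F - 1) = 1)
    (H : ∀ a : F, a ≠ 0 → ∃ n : ℤ, weilSum F p d a = n) (t : ZMod p) : t ^ d = t := by
  rcases eq_or_ne t 0 with rfl | ht
  · rw [zero_pow hd.ne']
  haveI : NeZero p := ⟨(Fact.out (p := p.Prime)).ne_zero⟩
  have Hall : ∀ a : F, ∃ n : ℤ, weilSum F p d a = n := by
    intro a
    rcases eq_or_ne a 0 with rfl | ha
    · exact ⟨0, by rw [weilSum_zero d hd hgcd]; simp⟩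
    · exact H a ha
  choose n hn using Hall
  set u := embF F p t with hu
  have hu0 : u ≠ 0 := embF_ne_zero ht
  have q0 : (Fintype.card F : ℂ) ≠ 0 := Nat.cast_ne_zero.mpr Fintype.card_ne_zero
  have main : ∀ c : F, canonicalPsi F p (u ^ d * c ^ d) = canonicalPsi F p (u * c ^ d) := by
    intro c
    set A : ZMod p → ℤ := fun j =>
      (∑ a ∈ Finset.univ.filter fun a : F => trF F p (c * a) = j, n a)
        - (Fintype.card F : ℤ) * (if j = trF F p (c ^ d) then 1 else 0) with hA
    have expand : ∀ t' : ZMod p,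
        ∑ j : ZMod p, (A j : ℂ) * auxZeta p ^ (t' * j).val
          = (∑ a : F, (n a : ℂ) * auxZeta p ^ (t' * trF F p (c * a)).val)
            - (Fintype.card F : ℂ) * auxZeta p ^ (t' * trF F p (c ^ d)).val := by
      intro t'
      have hterm : ∀ j : ZMod p, (A j : ℂ) * auxZeta p ^ (t' * j).val
          = (∑ a ∈ Finset.univ.filter fun a : F => trF F p (c * a) = j,
              (n a : ℂ) * auxZeta p ^ (t' * trF F p (c * a)).val)
            - (Fintype.card F : ℂ) * (if j = trF F p (c ^ d) then 1 else 0)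
              * auxZeta p ^ (t' * j).val := by
        intro j
        rw [hA]
        push_cast
        rw [Finset.sum_congr rfl (fun a ha => by
          rw [(Finset.mem_filter.mp ha).2] :
            ∀ a ∈ Finset.univ.filter fun a : F => trF F p (c * a) = j,
              (n a : ℂ) * auxZeta p ^ (t' * trF F p (c * a)).val
                = (n a : ℂ) * auxZeta p ^ (t' * j).val)]
        rw [← Finset.sum_mul]
        ring
      rw [Finset.sum_congr rfl fun j _ => hterm j, Finset.sum_sub_distrib]
      congr 1
      · exact Finset.sum_fiberwise Finset.univ (fun a : F => trF F p (c * a))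
          (fun a => (n a : ℂ) * auxZeta p ^ (t' * trF F p (c * a)).val)
      · rw [Finset.sum_eq_single (trF F p (c ^ d))]
        · rw [if_pos rfl, mul_one]
        · intro j _ hj
          rw [if_neg hj, mul_zero, zero_mul]
        · intro hh
          exact absurd (Finset.mem_univ _) hh
    have hA0 : ∑ j : ZMod p, (A j : ℂ) * auxZeta p ^ j.val = 0 := by
      have h1 := expand 1
      simp_rw [one_mul] at h1
      rw [h1]
      have e1 : ∑ a : F, (n a : ℂ) * auxZeta p ^ (trF F p (c * a)).val
          = (Fintype.card F : ℂ) * canonicalPsi F p (c ^ d) := by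
        rw [← sum_psi_weil d c]
        refine Finset.sum_congr rfl fun x _ => ?_
        rw [psi_eq, hn x]
        ring
      rw [e1, psi_eq]
      ring
    have hconst := constancy A hA0
    have hAt : ∑ j : ZMod p, (A j : ℂ) * auxZeta p ^ (t * j).val = 0 := by
      calc ∑ j : ZMod p, (A j : ℂ) * auxZeta p ^ (t * j).val
          = ∑ j : ZMod p, (A 0 : ℂ) * auxZeta p ^ (t * j).val :=
            Finset.sum_congr rfl fun j _ => by rw [hconst j 0]
        _ = (A 0 : ℂ) * ∑ j : ZMod p, auxZeta p ^ (t * j).val := by rw [Finset.mul_sum]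
        _ = (A 0 : ℂ) * ∑ j : ZMod p, auxZeta p ^ j.val := by
            congr 1
            exact Fintype.sum_bijective (fun j : ZMod p => t * j)
              ((Equiv.mulLeft₀ t ht).bijective) _ _ fun j => rfl
        _ = 0 := by rw [sum_auxZeta]; ring
    have hmain : (∑ a : F, (n a : ℂ) * auxZeta p ^ (t * trF F p (c * a)).val)
        - (Fintype.card F : ℂ) * auxZeta p ^ (t * trF F p (c ^ d)).val = 0 := by
      rw [← expand t]
      exact hAt
    have ht1 : ∀ y : F, auxZeta p ^ (t * trF F p y).val = canonicalPsi F p (u * y) := by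
      intro y
      rw [← trF_smul, ← psi_eq]
    have e2 : ∑ a : F, (n a : ℂ) * auxZeta p ^ (t * trF F p (c * a)).val
        = (Fintype.card F : ℂ) * canonicalPsi F p ((u * c) ^ d) := by
      rw [← sum_psi_weil d (u * c)]
      refine Finset.sum_congr rfl fun x _ => ?_
      rw [ht1, hn x, mul_assoc]
      ring
    rw [e2, ht1] at hmain
    have := sub_eq_zero.mp hmain
    have h4 : canonicalPsi F p ((u * c) ^ d) = canonicalPsi F p (u * c ^ d) :=
      mul_left_cancel₀ q0 this
    rw [mul_pow] at h4
    exact h4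
  have main' : ∀ w : F, canonicalPsi F p (u ^ d * w) = canonicalPsi F p (u * w) := by
    intro w
    obtain ⟨c, hc⟩ := (powd_bijective (F := F) d hd hgcd).2 w
    simp only at hc
    rw [← hc]
    exact main c
  have hv : u - u ^ d = 0 := by
    by_contra hv
    obtain ⟨w, hw⟩ := trF_nondeg (p := p) hv
    have h2 : canonicalPsi F p ((u - u ^ d) * w) * canonicalPsi F p (u ^ d * w)
        = canonicalPsi F p (u * w) := by
      rw [← psi_add]
      congr 1
      ring
    rw [← main' w] at h2
    have h3 : canonicalPsi F p ((u - u ^ d) * w) * canonicalPsi F p (u ^ d * w)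
        = 1 * canonicalPsi F p (u ^ d * w) := by rw [h2, one_mul]
    exact psi_ne_one hw (mul_right_cancel₀ (psi_ne_zero _) h3)
  have h5 : embF F p (t ^ d) = embF F p t := by
    rw [embF_pow, ← hu, ← (sub_eq_zero.mp hv)]
  exact embF_injective h5

end Aux

/-- The Weil spectrum consists of integers if and only if `d ≡ 1 (mod p−1)`. -/
theorem weilSpectrum_subset_int_iff (F : Type*) [Field F] [Fintype F]
    (p : ℕ) [Fact p.Prime] [CharP F p] (d : ℕ) (hd : 0 < d)
    (hgcd : Nat.gcd d (Fintype.card F - 1) = 1) :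
    {w : ℂ | ∃ a : F, a ≠ 0 ∧ weilSum F p d a = w} ⊆ Set.range ((↑) : ℤ → ℂ) ↔
      d ≡ 1 [MOD p - 1] := by
  constructor
  · intro hsub
    refine modeq_of_pow_eq (p := p) d hd ?_
    refine converse_pow_eq d hd hgcd ?_
    intro a ha
    obtain ⟨m, hm⟩ := hsub ⟨a, ha, rfl⟩
    exact ⟨m, hm.symm⟩
  · intro hmod w hw
    obtain ⟨a, _, rfl⟩ := hw
    obtain ⟨m, hm⟩ := weil_int d hd hmod a
    exact ⟨m, hm.symm⟩
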